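/- Let X, Y, Z be Hausdorff locally convex topological vector spaces over ℝ, and let i : X → Y and q : Y → Z be continuous linear maps such that i is a topological embedding, q is surjective and an open map, and the range of i equals the kernel of q. If X and Z are complete (as uniform spaces), then Y is complete. -/

import Mathlib

open Filter Set Topology Pointwise Uniformity

/-- A continuous additive-group-hom topological embedding between uniform additive
groups is uniform inducing. -/
lemma aux_isUniformInducing {X Y : Type} [AddCommGroup X] [UniformSpace X]
    [IsUniformAddGroup X] [AddCommGroup Y] [UniformSpace Y] [IsUniformAddGroup Y]
    (i : X → Y) (hsub : ∀ a b, i (a - b) = i a - i b) (h0 : i 0 = 0)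
    (hemb : Topology.IsEmbedding i) : IsUniformInducing i := by
  constructor
  rw [uniformity_eq_comap_nhds_zero Y, uniformity_eq_comap_nhds_zero X, comap_comap]
  have hn : 𝓝 (0 : X) = comap i (𝓝 (0 : Y)) := by
    have := hemb.isInducing.nhds_eq_comap (0 : X)
    rwa [h0] at this
  rw [hn, comap_comap]
  congr 1
  funext p
  simp [Function.comp, hsub]

/-- Let `X`, `Y`, `Z` be Hausdorff locally convex real topological vector
spaces (with their canonical uniform structures), `i : X → Y` a continuous linear
topological embedding and `q : Y → Z` a continuous linear open surjection with
`range i = ker q`.  If `X` and `Z` are complete then so is `Y`. -/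
theorem stmt10 {X Y Z : Type}
    [AddCommGroup X] [Module ℝ X] [UniformSpace X] [IsUniformAddGroup X]
    [ContinuousSMul ℝ X] [LocallyConvexSpace ℝ X] [T2Space X] [CompleteSpace X]
    [AddCommGroup Y] [Module ℝ Y] [UniformSpace Y] [IsUniformAddGroup Y]
    [ContinuousSMul ℝ Y] [LocallyConvexSpace ℝ Y] [T2Space Y]
    [AddCommGroup Z] [Module ℝ Z] [UniformSpace Z] [IsUniformAddGroup Z]
    [ContinuousSMul ℝ Z] [LocallyConvexSpace ℝ Z] [T2Space Z] [CompleteSpace Z]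
    (i : X →L[ℝ] Y) (q : Y →L[ℝ] Z)
    (hemb : Topology.IsEmbedding (⇑i)) (hsurj : Function.Surjective (⇑q))
    (hopen : IsOpenMap (⇑q))
    (hrange : Set.range (⇑i) = {y : Y | q y = 0}) :
    CompleteSpace Y := by
  -- the kernel of `q` is a complete subset of `Y`
  have hiu : IsUniformInducing (⇑i) :=
    aux_isUniformInducing (⇑i) (fun a b => by simp) (by simp) hemb
  have hN : IsComplete {y : Y | q y = 0} := hrange ▸ hiu.isComplete_range
  constructor
  intro f hf
  -- push the filter to `Z`, find the limit there and a preimage `y₀`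
  have hqc : UniformContinuous (⇑q) := q.uniformContinuous
  obtain ⟨z, hz⟩ := CompleteSpace.complete (hf.map hqc)
  obtain ⟨y₀, hy₀⟩ := hsurj z
  -- translate the filter so that its image tends to `0`
  set f' : Filter Y := map (fun y => y - y₀) f with hf'def
  have hf'c : Cauchy f' := hf.map (uniformContinuous_id.sub uniformContinuous_const)
  have hf'ne : NeBot f' := hf'c.1
  have hqf' : map (⇑q) f' ≤ 𝓝 0 := by
    have h1 : map (⇑q) f' = map (fun w => w - z) (map (⇑q) f) := by
      rw [hf'def, map_map, map_map]
      congr 1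
      funext y
      simp [hy₀]
    rw [h1]
    calc map (fun w => w - z) (map (⇑q) f) ≤ map (fun w => w - z) (𝓝 z) :=
          map_mono hz
      _ ≤ 𝓝 (z - z) := ((continuous_id.sub continuous_const).tendsto z)
      _ = 𝓝 0 := by rw [sub_self]
  -- the "thickened" filter
  set H : Filter Y := f' + 𝓝 0 with hHdef
  -- every set of `H` meets the kernel
  have hmeet : ∀ s ∈ H, (s ∩ {y : Y | q y = 0}).Nonempty := by
    intro s hs
    rw [hHdef, Filter.mem_add] at hs
    obtain ⟨A, hA, V, hV, hAV⟩ := hs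
    obtain ⟨U, hUV, hUo, hU0⟩ := mem_nhds_iff.1 hV
    have hqU : q '' (-U) ∈ 𝓝 (0 : Z) := by
      refine (hopen _ hUo.neg).mem_nhds ⟨0, by simpa using hU0, by simp⟩
    have hpre : (⇑q) ⁻¹' (q '' (-U)) ∈ f' := hqf' hqU
    obtain ⟨x, hxA, hxpre⟩ := Filter.nonempty_of_mem (inter_mem hA hpre)
    obtain ⟨u', hu', hqu⟩ := hxpre
    obtain ⟨u, huU, rfl⟩ : ∃ u ∈ U, -u = u' := ⟨-u', by simpa using hu', by simp⟩
    refine ⟨x + u, hAV ⟨x, hxA, u, hUV huU, rfl⟩, ?_⟩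
    have hsum : q (x + u) = q x + q u := by simp
    simp only [Set.mem_setOf_eq, hsum]
    rw [show q x = q (-u) from hqu.symm]
    simp
  have hHne : NeBot H := by
    constructor
    intro hbot
    have := hmeet ∅ (by rw [hbot]; exact mem_bot)
    simp at this
  -- `H` is Cauchy
  have hHc : Cauchy H := by
    rw [cauchy_iff]
    refine ⟨hHne, ?_⟩
    intro s hs
    rw [uniformity_eq_comap_nhds_zero Y] at hs
    obtain ⟨W, hW, hWs⟩ := mem_comap.1 hs
    obtain ⟨U, hU, hU4⟩ := exists_nhds_zero_quarter hW
    have hU0 : (0 : Y) ∈ U := mem_of_mem_nhds hU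
    -- a small set of `f'`
    have : {p : Y × Y | p.2 - p.1 ∈ U} ∈ 𝓤 Y := by
      rw [uniformity_eq_comap_nhds_zero Y]; exact preimage_mem_comap hU
    obtain ⟨A, hA, hAsmall⟩ := (cauchy_iff.1 hf'c).2 _ this
    set V : Set Y := U ∩ (-U) with hVdef
    have hVmem : V ∈ 𝓝 (0 : Y) := inter_mem hU (by simpa using neg_mem_nhds_zero Y hU)
    refine ⟨A + V, ?_, ?_⟩
    · rw [hHdef, Filter.mem_add]; exact ⟨A, hA, V, hVmem, subset_rfl⟩
    · rintro ⟨p1, p2⟩ ⟨hp1, hp2⟩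
      obtain ⟨a1, ha1, v1, hv1, rfl⟩ := hp1
      obtain ⟨a2, ha2, v2, hv2, rfl⟩ := hp2
      apply hWs
      have hdiff : (a2 + v2) - (a1 + v1) = (a2 - a1) + v2 + (-v1) + 0 := by abel
      simp only [Set.mem_preimage, Set.mem_setOf_eq, hdiff]
      exact hU4 (hAsmall (Set.mk_mem_prod ha1 ha2)) hv2.1 (by simpa using hv1.2) hU0
  -- the trace of `H` on the kernel is a Cauchy filter on a complete set
  set G : Filter Y := H ⊓ 𝓟 {y : Y | q y = 0} with hGdef
  have hGne : NeBot G := inf_principal_neBot_iff.2 hmeet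
  have hGc : Cauchy G := hHc.mono inf_le_left
  obtain ⟨n, _, hGn⟩ := hN G hGc (inf_le_right)
  -- `H` converges to `n`
  have hcluster : ClusterPt n H := hGne.mono (le_inf hGn inf_le_left)
  have hHle : H ≤ 𝓝 n := le_nhds_of_cauchy_adhp hHc hcluster
  -- `f'` is finer than `H`
  have hf'H : f' ≤ H := by
    intro s hs
    rw [hHdef, Filter.mem_add] at hs
    obtain ⟨A, hA, V, hV, hAV⟩ := hs
    have hV0 : (0 : Y) ∈ V := mem_of_mem_nhds hV
    exact mem_of_superset hA fun a ha => hAV ⟨a, ha, 0, hV0, add_zero a⟩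
  have hf'n : f' ≤ 𝓝 n := hf'H.trans hHle
  -- translate back
  refine ⟨n + y₀, ?_⟩
  have hfeq : f = map (fun y => y + y₀) f' := by
    rw [hf'def, map_map]
    have hcomp : ((fun y => y + y₀) ∘ fun y : Y => y - y₀) = id := by
      funext y; simp
    rw [hcomp, map_id]
  rw [hfeq]
  calc map (fun y => y + y₀) f' ≤ map (fun y => y + y₀) (𝓝 n) := map_mono hf'n
    _ ≤ 𝓝 (n + y₀) := ((continuous_id.add continuous_const).tendsto n)
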